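/- arXiv:0804.0560 — 2 statements merged into one kernel-verified Lean document; each statement's English description precedes it below -/
import Mathlib

section
/- Let α > 0, set β = α/√(1+α) and c = 1/√(1+α), and define w : ℝ → ℝ by w(ξ) = (1 - exp(βξ))^(1/α) (real power). Then for every ξ < 0 the profile w satisfies the travelling-wave ODE c·w'(ξ) + d/dξ[ w(ξ)^α · w'(ξ) ] + w(ξ)·(1 - w(ξ)^α) = 0, where all derivatives exist in the classical sense at each ξ < 0. -/
/-- The Newman profile `w(ξ) = (1 - e^{βξ})^{1/α}` with `β = α/√(1+α)` and
`c = 1/√(1+α)` satisfies, for every `ξ < 0`, the travelling-wave ODE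
`c w' + (w^α w')' + w(1 - w^α) = 0`, all derivatives existing classically. -/
theorem travelling_wave_profile_ode
    (α β c : ℝ) (hα : 0 < α)
    (hβ : β = α / Real.sqrt (1 + α))
    (hc : c = 1 / Real.sqrt (1 + α))
    (w : ℝ → ℝ) (hw : ∀ ξ : ℝ, w ξ = (1 - Real.exp (β * ξ)) ^ (1 / α)) :
    ∀ ξ < (0 : ℝ),
      DifferentiableAt ℝ w ξ ∧
      DifferentiableAt ℝ (fun s => w s ^ α * deriv w s) ξ ∧
      c * deriv w ξ + deriv (fun s => w s ^ α * deriv w s) ξ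
        + w ξ * (1 - w ξ ^ α) = 0 := by
  have hs : 0 < Real.sqrt (1 + α) := Real.sqrt_pos.2 (by linarith)
  have hβ0 : 0 < β := hβ ▸ div_pos hα hs
  have hcs : c * Real.sqrt (1 + α) = 1 := by
    rw [hc]; field_simp
  have hc2 : c * c * (1 + α) = 1 := by
    have := Real.sq_sqrt (by linarith : (0:ℝ) ≤ 1 + α)
    nlinarith [hcs]
  have hβc : β = α * c := by rw [hβ, hc]; ring
  -- derivative of w at any t < 0
  have key : ∀ t < (0:ℝ), 0 < 1 - Real.exp (β * t) ∧
      HasDerivAt w ((1/α) * (1 - Real.exp (β * t)) ^ (1/α - 1)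
        * (-(Real.exp (β * t) * β))) t := by
    intro t ht
    have hE : Real.exp (β * t) < 1 := by
      rw [← Real.exp_zero]
      exact Real.exp_lt_exp.2 (by nlinarith)
    refine ⟨by linarith, ?_⟩
    have h1 : HasDerivAt (fun s : ℝ => β * s) β t := by
      simpa using (hasDerivAt_id t).const_mul β
    have h2 := h1.exp
    have h3 : HasDerivAt (fun s : ℝ => 1 - Real.exp (β * s))
        (-(Real.exp (β * t) * β)) t := by
      exact ((hasDerivAt_const t (1:ℝ)).sub h2).congr_deriv (by simp)
    have h4 := h3.rpow_const (p := 1/α) (Or.inl (by linarith : (1:ℝ) - Real.exp (β*t) ≠ 0))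
    have hwe : w = fun s => (1 - Real.exp (β * s)) ^ (1/α) := funext hw
    rw [hwe]
    convert h4 using 1; ring
  intro ξ hξ
  obtain ⟨hy, hW⟩ := key ξ hξ
  set E := Real.exp (β * ξ) with hE
  set y := 1 - E with hyd
  -- w ξ ^ α = y for any point, and function g agrees with G near ξ
  have hpow : ∀ t < (0:ℝ), w t ^ α = 1 - Real.exp (β * t) := by
    intro t ht
    obtain ⟨hyt, _⟩ := key t ht
    rw [hw t, ← Real.rpow_mul hyt.le, one_div, inv_mul_cancel₀ hα.ne', Real.rpow_one]
  have hG : HasDerivAt (fun s => (-(β/α) * Real.exp (β*s)) * (1 - Real.exp (β*s)) ^ (1/α))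
      ((-(β/α) * (E * β)) * y ^ (1/α)
        + (-(β/α) * E) * ((1/α) * y ^ (1/α - 1) * (-(E * β)))) ξ := by
    have h1 : HasDerivAt (fun s : ℝ => β * s) β ξ := by
      simpa using (hasDerivAt_id ξ).const_mul β
    have h2 := h1.exp
    have h3 : HasDerivAt (fun s : ℝ => 1 - Real.exp (β * s)) (-(E * β)) ξ := by
      exact ((hasDerivAt_const ξ (1:ℝ)).sub h2).congr_deriv (by simp [hE])
    have h4 := h3.rpow_const (p := 1/α) (Or.inl hy.ne')
    have h5 := (h2.const_mul (-(β/α))).mul h4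
    refine h5.congr_deriv ?_
    rw [hyd, hE]
    ring
  have heq : (fun s => w s ^ α * deriv w s) =ᶠ[nhds ξ]
      (fun s => (-(β/α) * Real.exp (β*s)) * (1 - Real.exp (β*s)) ^ (1/α)) := by
    filter_upwards [Iio_mem_nhds hξ] with t ht
    obtain ⟨hyt, hWt⟩ := key t ht
    have hsplit := Real.rpow_add hyt 1 (1/α - 1)
    rw [show (1:ℝ) + (1/α - 1) = 1/α from by ring, Real.rpow_one] at hsplit
    rw [hpow t ht, hWt.deriv, hsplit]
    ring
  have hgd := hG.congr_of_eventuallyEq heq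
  refine ⟨hW.differentiableAt, hgd.differentiableAt, ?_⟩
  rw [hW.deriv, hgd.deriv, hpow ξ hξ, hw ξ]
  have hsplit := Real.rpow_add hy 1 (1/α - 1)
  rw [show (1:ℝ) + (1/α - 1) = 1/α from by ring, Real.rpow_one] at hsplit
  rw [← hE, ← hyd, hsplit, hβc]
  have hα' : α ≠ 0 := hα.ne'
  set q := y ^ (1/α - 1) with hq
  rw [hyd]
  field_simp
  ring_nf
  linear_combination (-(q*E*(1-E))) * hc2
end

section
/- Let α > 0, set β = α/√(1+α) and c = 1/√(1+α), and define u : ℝ × ℝ → ℝ by u(t,x) = (1 - exp(β(x - ct)))^(1/α) for x < ct and u(t,x) = 0 for x ≥ ct. Then at every point (t,x) of the open half-plane {(t,x) : x < ct}, u is differentiable in t, the map x ↦ u(t,x)^α · ∂ₓu(t,x) is differentiable in x, and u satisfies the generalized Fisher–Kolmogoroff equation ∂ₜu(t,x) = ∂ₓ( u(t,x)^α · ∂ₓu(t,x) ) + u(t,x)·(1 - u(t,x)^α). -/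
/-- Newman's exact travelling-wave solution
`u(t,x) = (1 - e^{β(x-ct)})^{1/α}` for `x < ct`, `u = 0` otherwise,
with `β = α/√(1+α)` and `c = 1/√(1+α)`, satisfies the generalized
Fisher–Kolmogoroff equation `∂ₜu = ∂ₓ(u^α ∂ₓu) + u(1 - u^α)` on the open
half-plane `{x < ct}`, with the stated derivatives existing there. -/
theorem newman_exact_solution
    (α β c : ℝ) (hα : 0 < α)
    (hβ : β = α / Real.sqrt (1 + α))
    (hc : c = 1 / Real.sqrt (1 + α))
    (u : ℝ → ℝ → ℝ)
    (hu : ∀ t x : ℝ, u t x =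
      if x < c * t then (1 - Real.exp (β * (x - c * t))) ^ (1 / α) else 0) :
    ∀ t x : ℝ, x < c * t →
      DifferentiableAt ℝ (fun s => u s x) t ∧
      DifferentiableAt ℝ (fun y => u t y ^ α * deriv (fun z => u t z) y) x ∧
      deriv (fun s => u s x) t
        = deriv (fun y => u t y ^ α * deriv (fun z => u t z) y) x
          + u t x * (1 - u t x ^ α) := by
  have hs : 0 < Real.sqrt (1 + α) := Real.sqrt_pos.mpr (by linarith)
  have hs2 : Real.sqrt (1 + α) ^ 2 = 1 + α := Real.sq_sqrt (by linarith)
  have hc0 : 0 < c := by rw [hc]; positivity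
  have hβ0 : 0 < β := by rw [hβ]; positivity
  have hβc : β = α * c := by rw [hβ, hc]; ring
  have hc2 : (1 + α) * c ^ 2 = 1 := by
    rw [hc]; field_simp; exact hs2.symm
  intro t x hx
  have hwpos : ∀ y : ℝ, y < c * t → 0 < 1 - Real.exp (β * (y - c * t)) := by
    intro y hy
    have h1 : β * (y - c * t) < 0 := mul_neg_of_pos_of_neg hβ0 (by linarith)
    have h2 : Real.exp (β * (y - c * t)) < 1 := Real.exp_lt_one_iff.mpr h1
    linarith
  -- spatial derivative of the smooth branch
  have hf : ∀ y : ℝ, y < c * t →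
      HasDerivAt (fun z => (1 - Real.exp (β * (z - c * t))) ^ (1 / α))
        ((1/α) * (1 - Real.exp (β * (y - c * t))) ^ (1/α - 1)
          * (-(Real.exp (β * (y - c * t)) * β))) y := by
    intro y hy
    have h1 : HasDerivAt (fun z : ℝ => β * (z - c * t)) β y := by
      simpa using ((hasDerivAt_id y).sub_const (c * t)).const_mul β
    have h2 := (h1.exp.const_sub 1).rpow_const (p := 1/α)
      (Or.inl (ne_of_gt (hwpos y hy)))
    convert h2 using 1
    ring
  have hVopen : IsOpen {y : ℝ | y < c * t} := isOpen_Iio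
  -- eventual equality for the t-derivative
  have hUopen : IsOpen {s : ℝ | x < c * s} :=
    isOpen_lt continuous_const (continuous_const.mul continuous_id)
  have hteq : (fun s => u s x)
      =ᶠ[nhds t] (fun s => (1 - Real.exp (β * (x - c * s))) ^ (1/α)) := by
    filter_upwards [hUopen.mem_nhds hx] with s hs'
    rw [hu]; exact if_pos hs'
  have hg : HasDerivAt (fun s => (1 - Real.exp (β * (x - c * s))) ^ (1/α))
      ((1/α) * (1 - Real.exp (β * (x - c * t))) ^ (1/α - 1)
        * (Real.exp (β * (x - c * t)) * β * c)) t := by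
    have h1 : HasDerivAt (fun s : ℝ => β * (x - c * s)) (β * (-c)) t := by
      simpa using (((hasDerivAt_id t).const_mul c).const_sub x).const_mul β
    have h2 := (h1.exp.const_sub 1).rpow_const (p := 1/α)
      (Or.inl (ne_of_gt (hwpos x hx)))
    convert h2 using 1
    ring
  -- eventual equality for the flux term
  have hkey : (fun y => u t y ^ α * deriv (fun z => u t z) y)
      =ᶠ[nhds x] (fun y => -c * (Real.exp (β * (y - c * t))
        * (1 - Real.exp (β * (y - c * t))) ^ (1/α))) := by
    filter_upwards [hVopen.mem_nhds hx] with y hy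
    have hwy := hwpos y hy
    have h1 : u t y = (1 - Real.exp (β * (y - c * t))) ^ (1/α) := by
      rw [hu]; exact if_pos hy
    have h2 : u t y ^ α = 1 - Real.exp (β * (y - c * t)) := by
      rw [h1, ← Real.rpow_mul hwy.le, one_div, inv_mul_cancel₀ hα.ne',
        Real.rpow_one]
    have h3 : deriv (fun z => u t z) y
        = (1/α) * (1 - Real.exp (β * (y - c * t))) ^ (1/α - 1)
          * (-(Real.exp (β * (y - c * t)) * β)) := by
      have heq : (fun z => u t z)
          =ᶠ[nhds y] (fun z => (1 - Real.exp (β * (z - c * t))) ^ (1/α)) := by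
        filter_upwards [hVopen.mem_nhds hy] with z hz
        rw [hu]; exact if_pos hz
      rw [heq.deriv_eq, (hf y hy).deriv]
    have h4 : (1 - Real.exp (β * (y - c * t))) ^ (1/α)
        = (1 - Real.exp (β * (y - c * t))) ^ (1/α - 1)
          * (1 - Real.exp (β * (y - c * t))) := by
      have := Real.rpow_add hwy (1/α - 1) 1
      simpa using this
    rw [h2, h3, h4]
    have hba : (1/α) * β = c := by rw [hβc]; field_simp
    linear_combination (-(Real.exp (β * (y - c * t))
      * (1 - Real.exp (β * (y - c * t)))
      * (1 - Real.exp (β * (y - c * t))) ^ (1/α - 1))) * hba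
  -- derivative of the flux function
  have hH : HasDerivAt (fun y => -c * (Real.exp (β * (y - c * t))
        * (1 - Real.exp (β * (y - c * t))) ^ (1/α)))
      (-c * ((Real.exp (β * (x - c * t)) * β)
          * (1 - Real.exp (β * (x - c * t))) ^ (1/α)
        + Real.exp (β * (x - c * t))
          * ((1/α) * (1 - Real.exp (β * (x - c * t))) ^ (1/α - 1)
            * (-(Real.exp (β * (x - c * t)) * β))))) x := by
    have h1 : HasDerivAt (fun z : ℝ => β * (z - c * t)) β x := by
      simpa using ((hasDerivAt_id x).sub_const (c * t)).const_mul β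
    exact (h1.exp.mul (hf x hx)).const_mul (-c)
  refine ⟨hteq.differentiableAt_iff.mpr hg.differentiableAt,
    hkey.differentiableAt_iff.mpr hH.differentiableAt, ?_⟩
  rw [hteq.deriv_eq, hg.deriv, hkey.deriv_eq, hH.deriv]
  have hwx := hwpos x hx
  have h1 : u t x = (1 - Real.exp (β * (x - c * t))) ^ (1/α) := by
    rw [hu]; exact if_pos hx
  have h2 : u t x ^ α = 1 - Real.exp (β * (x - c * t)) := by
    rw [h1, ← Real.rpow_mul hwx.le, one_div, inv_mul_cancel₀ hα.ne',
      Real.rpow_one]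
  have h4 : (1 - Real.exp (β * (x - c * t))) ^ (1/α)
      = (1 - Real.exp (β * (x - c * t))) ^ (1/α - 1)
        * (1 - Real.exp (β * (x - c * t))) := by
    have := Real.rpow_add hwx (1/α - 1) 1
    simpa using this
  rw [h2, h1, h4]
  set E := Real.exp (β * (x - c * t)) with hE
  set W := (1 - E) ^ (1/α - 1) with hW
  rw [hβc]
  field_simp
  linear_combination (E * W * (1 - E)) * hc2
end
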